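/- Let p and q be distinct odd primes, and let G̃ be the group generated by ε, σ_p, σ_q with ε central of order 2, σ_p σ_q = σ_q σ_p ε, σ_p of order p−1, and σ_q of order 2(q−1) with σ_q^{q−1} = ε. Then the subgroup N generated by σ_p and σ_q² is abelian, has index 2 in G̃, and is isomorphic to ℤ/(p−1) ⊕ ℤ/(q−1). -/

import Mathlib

/-- Relators for the group generated by `ε` (index 0), `σ_p` (index 1), `σ_q` (index 2)
subject to: `ε` central, `ε² = 1`, `σ_p σ_q = σ_q σ_p ε`, `σ_p` of order `p-1`,
`σ_q` of order `2(q-1)` with `σ_q^{q-1} = ε` (Case B of the paper). -/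
def stmt2Rels (p q : ℕ) : Set (FreeGroup (Fin 3)) :=
  { (FreeGroup.of 0) ^ 2,
    (FreeGroup.of 0) * (FreeGroup.of 1) * (FreeGroup.of 0)⁻¹ * (FreeGroup.of 1)⁻¹,
    (FreeGroup.of 0) * (FreeGroup.of 2) * (FreeGroup.of 0)⁻¹ * (FreeGroup.of 2)⁻¹,
    (FreeGroup.of 1) ^ (p - 1),
    (FreeGroup.of 2) ^ (2 * (q - 1)),
    (FreeGroup.of 2) ^ (q - 1) * (FreeGroup.of 0)⁻¹,
    (FreeGroup.of 1) * (FreeGroup.of 2) *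
      ((FreeGroup.of 2) * (FreeGroup.of 1) * (FreeGroup.of 0))⁻¹ }

section helpers

lemma addLeft_npow {A : Type*} [AddGroup A] (u : A) (n : ℕ) :
    (Equiv.addLeft u) ^ n = Equiv.addLeft (n • u) := by
  induction n with
  | zero => ext x; simp
  | succ n ih =>
    ext x
    simp [pow_succ, ih, Equiv.Perm.mul_apply, succ_nsmul, add_assoc]

lemma presented_rel {α : Type*} {rels : Set (FreeGroup α)} {r : FreeGroup α}
    (hr : r ∈ rels) : (QuotientGroup.mk r : PresentedGroup rels) = 1 :=
  (QuotientGroup.eq_one_iff r).mpr (Subgroup.subset_normalClosure hr)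

/-- hom out of `Multiplicative (ZMod n)` from an element with `g ^ n = 1`. -/
lemma powHom_exists {G : Type*} [Group G] (g : G) (n : ℕ) (hg : g ^ n = 1) :
    ∃ f : Multiplicative (ZMod n) →* G,
      ∀ k : ℕ, f (Multiplicative.ofAdd ((k : ℕ) : ZMod n)) = g ^ k := by
  have h0 : (zpowersHom G g).toAdditiveRight (n : ℤ) = 0 := by
    simp only [MonoidHom.toAdditiveRight]
    show Additive.ofMul ((zpowersHom G g) (Multiplicative.ofAdd (n : ℤ))) = 0
    simp [zpowersHom_apply, zpow_natCast, hg]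
  refine ⟨AddMonoidHom.toMultiplicativeLeft (ZMod.lift n ⟨(zpowersHom G g).toAdditiveRight, h0⟩),
    fun k => ?_⟩
  have : ((k : ℕ) : ZMod n) = ((k : ℤ) : ZMod n) := by push_cast; rfl
  rw [this]
  show ((ZMod.lift n ⟨(zpowersHom G g).toAdditiveRight, h0⟩) ((k : ℤ) : ZMod n)).toMul = g ^ k
  rw [ZMod.lift_coe]
  show (Additive.ofMul ((zpowersHom G g) (Multiplicative.ofAdd (k : ℤ)))).toMul = g ^ k
  simp [zpowersHom_apply, zpow_natCast]

end helpers

/-- `Multiplicative` of a product, as a product of `Multiplicative`s. -/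
def multProdEquiv {A B : Type*} [AddMonoid A] [AddMonoid B] :
    Multiplicative (A × B) ≃* Multiplicative A × Multiplicative B where
  toFun x := (Multiplicative.ofAdd (Multiplicative.toAdd x).1,
    Multiplicative.ofAdd (Multiplicative.toAdd x).2)
  invFun x := Multiplicative.ofAdd (Multiplicative.toAdd x.1, Multiplicative.toAdd x.2)
  left_inv _ := rfl
  right_inv _ := rfl
  map_mul' _ _ := rfl
/-- for distinct odd primes `p, q`, in the group
`G̃ = ⟨ε, σ_p, σ_q | ε central of order 2, σ_pσ_q = σ_qσ_pε, σ_p^{p-1} = 1,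
σ_q^{2(q-1)} = 1, σ_q^{q-1} = ε⟩`, the subgroup `N = ⟨σ_p, σ_q²⟩` is abelian,
has index 2, and is isomorphic to `ℤ/(p-1) ⊕ ℤ/(q-1)`. -/
theorem stmt_2 (p q : ℕ) (hp : p.Prime) (hq : q.Prime) (hp2 : p ≠ 2) (hq2 : q ≠ 2)
    (hpq : p ≠ q)
    (N : Subgroup (PresentedGroup (stmt2Rels p q)))
    (hN : N = Subgroup.closure
      {PresentedGroup.of 1, (PresentedGroup.of (rels := stmt2Rels p q) 2) ^ 2}) :
    (∀ x y : N, x * y = y * x) ∧ N.index = 2 ∧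
      Nonempty (N ≃* Multiplicative (ZMod (p - 1) × ZMod (q - 1))) := by

  -- numeric facts
  have hp3 : 3 ≤ p := by rcases hp.two_le.lt_or_eq with h | h; omega; omega
  have hq3 : 3 ≤ q := by rcases hq.two_le.lt_or_eq with h | h; omega; omega
  obtain ⟨k, hqk⟩ : ∃ k, q - 1 = 2 * k := by
    obtain ⟨m, hm⟩ := hq.odd_of_ne_two hq2; exact ⟨m, by omega⟩
  obtain ⟨k', hpk⟩ : ∃ k', p - 1 = 2 * k' := by
    obtain ⟨m, hm⟩ := hp.odd_of_ne_two hp2; exact ⟨m, by omega⟩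
  have hk1 : 1 ≤ k := by omega
  haveI : NeZero (p - 1) := ⟨by omega⟩
  haveI : NeZero (q - 1) := ⟨by omega⟩
  haveI : NeZero (2 * (q - 1)) := ⟨by omega⟩
  -- the generators
  set E : PresentedGroup (stmt2Rels p q) := PresentedGroup.of 0 with hEdef
  set S : PresentedGroup (stmt2Rels p q) := PresentedGroup.of 1 with hSdef
  set T : PresentedGroup (stmt2Rels p q) := PresentedGroup.of 2 with hTdef
  -- membership helpers in the relator set
  have mem1 : (FreeGroup.of 0 : FreeGroup (Fin 3)) ^ 2 ∈ stmt2Rels p q := Set.mem_insert _ _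
  have mem2 : (FreeGroup.of 0) * (FreeGroup.of 1) * (FreeGroup.of 0)⁻¹ * (FreeGroup.of 1)⁻¹
      ∈ stmt2Rels p q := by right; left; rfl
  have mem3 : (FreeGroup.of 0) * (FreeGroup.of 2) * (FreeGroup.of 0)⁻¹ * (FreeGroup.of 2)⁻¹
      ∈ stmt2Rels p q := by right; right; left; rfl
  have mem4 : (FreeGroup.of 1 : FreeGroup (Fin 3)) ^ (p - 1) ∈ stmt2Rels p q := by
    right; right; right; left; rfl
  have mem5 : (FreeGroup.of 2 : FreeGroup (Fin 3)) ^ (2 * (q - 1)) ∈ stmt2Rels p q := by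
    right; right; right; right; left; rfl
  have mem6 : (FreeGroup.of 2 : FreeGroup (Fin 3)) ^ (q - 1) * (FreeGroup.of 0)⁻¹
      ∈ stmt2Rels p q := by right; right; right; right; right; left; rfl
  have mem7 : (FreeGroup.of 1) * (FreeGroup.of 2) *
      ((FreeGroup.of 2) * (FreeGroup.of 1) * (FreeGroup.of 0) : FreeGroup (Fin 3))⁻¹
      ∈ stmt2Rels p q := by right; right; right; right; right; right; rfl
  -- relations in the presented group
  have hE2 : E ^ 2 = 1 := by
    have := presented_rel (rels := stmt2Rels p q) mem1
    rwa [QuotientGroup.mk_pow] at this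
  have hES : E * S = S * E := by
    have := presented_rel (rels := stmt2Rels p q) mem2
    rw [QuotientGroup.mk_mul, QuotientGroup.mk_mul, QuotientGroup.mk_mul, QuotientGroup.mk_inv,
      QuotientGroup.mk_inv, mul_inv_eq_one, mul_inv_eq_iff_eq_mul] at this
    exact this
  have hET : E * T = T * E := by
    have := presented_rel (rels := stmt2Rels p q) mem3
    rw [QuotientGroup.mk_mul, QuotientGroup.mk_mul, QuotientGroup.mk_mul, QuotientGroup.mk_inv,
      QuotientGroup.mk_inv, mul_inv_eq_one, mul_inv_eq_iff_eq_mul] at this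
    exact this
  have hSp : S ^ (p - 1) = 1 := by
    have := presented_rel (rels := stmt2Rels p q) mem4
    rwa [QuotientGroup.mk_pow] at this
  have hT2q : T ^ (2 * (q - 1)) = 1 := by
    have := presented_rel (rels := stmt2Rels p q) mem5
    rwa [QuotientGroup.mk_pow] at this
  have hTq : T ^ (q - 1) = E := by
    have := presented_rel (rels := stmt2Rels p q) mem6
    rwa [QuotientGroup.mk_mul, QuotientGroup.mk_pow, QuotientGroup.mk_inv, mul_inv_eq_one]
      at this
  have hST : S * T = T * S * E := by
    have := presented_rel (rels := stmt2Rels p q) mem7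
    rwa [QuotientGroup.mk_mul, QuotientGroup.mk_mul, QuotientGroup.mk_inv, QuotientGroup.mk_mul,
      QuotientGroup.mk_mul, mul_inv_eq_one] at this
  -- derived relations
  have hEinv : E⁻¹ = E := by
    rw [← mul_eq_one_iff_inv_eq]; rw [pow_two] at hE2; exact hE2
  have hb : T ^ 2 ∈ ({PresentedGroup.of 1, (PresentedGroup.of (rels := stmt2Rels p q) 2) ^ 2} :
      Set (PresentedGroup (stmt2Rels p q))) := by right; rfl
  have ha : S ∈ ({PresentedGroup.of 1, (PresentedGroup.of (rels := stmt2Rels p q) 2) ^ 2} :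
      Set (PresentedGroup (stmt2Rels p q))) := by left; rfl
  have haN : S ∈ N := hN ▸ Subgroup.subset_closure ha
  have hbN : T ^ 2 ∈ N := hN ▸ Subgroup.subset_closure hb
  have hEb : E = (T ^ 2) ^ k := by rw [← pow_mul, ← hqk, hTq]
  have hEN : E ∈ N := hEb ▸ pow_mem hbN k
  have hbq : (T ^ 2) ^ (q - 1) = 1 := by rw [← pow_mul]; exact hT2q
  -- conjugation facts
  have hTS : T * S = S * T * E := by
    have : S * T * E⁻¹ = T * S := by rw [hST]; group
    rw [← this, hEinv]
  have cET : Commute E T := hET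
  have hconj : T * S * T⁻¹ = S * E := by
    rw [hTS, mul_assoc, mul_assoc, cET.inv_right.eq]
    group
  have hconj' : T⁻¹ * S * T = S * E := by
    rw [mul_assoc, hST]; group
  have hab : S * T ^ 2 = T ^ 2 * S := by
    calc S * T ^ 2 = S * T * T := by rw [pow_two, mul_assoc]
    _ = T * S * E * T := by rw [hST]
    _ = T * S * (E * T) := by rw [mul_assoc]
    _ = T * S * (T * E) := by rw [hET]
    _ = T * (S * T) * E := by simp only [mul_assoc]
    _ = T * (T * S * E) * E := by rw [hST]
    _ = T * T * S * (E * E) := by simp only [mul_assoc]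
    _ = T ^ 2 * S := by rw [← pow_two E, hE2, mul_one, ← pow_two T]
  -- cast facts mod 2
  have hdvd2 : ((2 * (q - 1) : ℕ) : ZMod 2) = 0 :=
    (ZMod.natCast_eq_zero_iff _ _).mpr ⟨q - 1, rfl⟩
  have hdvd1 : ((q - 1 : ℕ) : ZMod 2) = 0 :=
    (ZMod.natCast_eq_zero_iff _ _).mpr ⟨k, hqk⟩
  have hpow2 : ∀ n : ℕ, ((n : ℕ) : ZMod 2) = 0 →
      (Multiplicative.ofAdd (1 : ZMod 2)) ^ n = 1 := by
    intro n hn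
    rw [← ofAdd_nsmul, nsmul_eq_mul, mul_one, hn]
    rfl
  -- the homomorphism onto Z/2 detecting the coset of T
  obtain ⟨Φ, hΦE, hΦS, hΦT⟩ : ∃ Φ : PresentedGroup (stmt2Rels p q) →* Multiplicative (ZMod 2),
      Φ E = 1 ∧ Φ S = 1 ∧ Φ T = Multiplicative.ofAdd 1 := by
    have hrel : ∀ r ∈ stmt2Rels p q,
        (FreeGroup.lift ![(1 : Multiplicative (ZMod 2)), 1, Multiplicative.ofAdd 1]) r = 1 := by
      intro r hr
      simp only [stmt2Rels, Set.mem_insert_iff, Set.mem_singleton_iff] at hr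
      rcases hr with rfl | rfl | rfl | rfl | rfl | rfl | rfl <;>
        simp only [map_mul, map_pow, map_inv, FreeGroup.lift_apply_of, Matrix.cons_val_zero,
          Matrix.cons_val_one, Matrix.head_cons, Matrix.cons_val_two, Matrix.tail_cons]
      · exact one_pow 2
      · simp
      · simp
      · exact one_pow _
      · exact hpow2 _ hdvd2
      · rw [inv_one, mul_one]; exact hpow2 _ hdvd1
      · simp
    exact ⟨PresentedGroup.toGroup hrel,
      by rw [hEdef, PresentedGroup.toGroup.of]; rfl, by rw [hSdef, PresentedGroup.toGroup.of]; rfl,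
      by rw [hTdef, PresentedGroup.toGroup.of]; rfl⟩
  -- the abelianized homomorphism detecting the S-exponent
  obtain ⟨θ, hθS, hθT⟩ : ∃ θ : PresentedGroup (stmt2Rels p q) →* Multiplicative (ZMod (p - 1)),
      θ S = Multiplicative.ofAdd 1 ∧ θ T = 1 := by
    have hrel : ∀ r ∈ stmt2Rels p q,
        (FreeGroup.lift ![(1 : Multiplicative (ZMod (p - 1))), Multiplicative.ofAdd 1, 1]) r
          = 1 := by
      intro r hr
      simp only [stmt2Rels, Set.mem_insert_iff, Set.mem_singleton_iff] at hr
      rcases hr with rfl | rfl | rfl | rfl | rfl | rfl | rfl <;>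
        simp only [map_mul, map_pow, map_inv, FreeGroup.lift_apply_of, Matrix.cons_val_zero,
          Matrix.cons_val_one, Matrix.head_cons, Matrix.cons_val_two, Matrix.tail_cons]
      · exact one_pow 2
      · simp
      · simp
      · rw [← ofAdd_nsmul, nsmul_eq_mul, mul_one, ZMod.natCast_self]; rfl
      · exact one_pow _
      · simp
      · simp
    exact ⟨PresentedGroup.toGroup hrel,
      by rw [hSdef, PresentedGroup.toGroup.of]; rfl, by rw [hTdef, PresentedGroup.toGroup.of]; rfl⟩
  -- arithmetic mod 2(q-1)
  have hcast : ((2 * (q - 1) : ℕ) : ZMod (2 * (q - 1))) = 0 := ZMod.natCast_self _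
  set cc : ZMod (2 * (q - 1)) := ((q - 1 : ℕ) : ZMod (2 * (q - 1))) with hccdef
  have hcc2 : cc + cc = 0 := by
    have h : ((q - 1) + (q - 1) : ℕ) = 2 * (q - 1) := by ring
    calc cc + cc = (((q - 1) + (q - 1) : ℕ) : ZMod (2 * (q - 1))) := by push_cast; rfl
    _ = 0 := by rw [h, hcast]
  have hccsq : cc * cc = 0 := by
    have h : ((q - 1) * (q - 1) : ℕ) = (2 * (q - 1)) * k := by rw [hqk]; ring
    calc cc * cc = (((q - 1) * (q - 1) : ℕ) : ZMod (2 * (q - 1))) := by push_cast; rfl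
    _ = (((2 * (q - 1)) * k : ℕ) : ZMod (2 * (q - 1))) := congrArg _ h
    _ = 0 := by rw [Nat.cast_mul, hcast, zero_mul]
  have hqq : ((q : ℕ) : ZMod (2 * (q - 1))) = cc + 1 := by
    have h : (q : ℕ) = (q - 1) + 1 := by omega
    calc ((q : ℕ) : ZMod (2 * (q - 1)))
        = (((q - 1) + 1 : ℕ) : ZMod (2 * (q - 1))) := congrArg _ h
    _ = cc + 1 := by push_cast; rfl
  have hqq2 : ((q : ℕ) : ZMod (2 * (q - 1))) * ((q : ℕ) : ZMod (2 * (q - 1))) = 1 := by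
    rw [hqq, add_mul, one_mul, mul_add, mul_one, hccsq, zero_add, ← add_assoc, hcc2, zero_add]
  have hqcc : ((q : ℕ) : ZMod (2 * (q - 1))) * cc = cc := by
    rw [hqq, add_mul, one_mul, hccsq, zero_add]
  -- the multiplication-by-q involution
  set μ : Equiv.Perm (ZMod (2 * (q - 1))) :=
    { toFun := fun x => ((q : ℕ) : ZMod (2 * (q - 1))) * x,
      invFun := fun x => ((q : ℕ) : ZMod (2 * (q - 1))) * x,
      left_inv := fun x => by simp only [← mul_assoc, hqq2, one_mul],
      right_inv := fun x => by simp only [← mul_assoc, hqq2, one_mul] } with hμdef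
  have hμ2 : μ ^ 2 = 1 := by
    rw [pow_two]
    refine Equiv.ext fun x => ?_
    show ((q : ℕ) : ZMod (2 * (q - 1))) * (((q : ℕ) : ZMod (2 * (q - 1))) * x) = x
    rw [← mul_assoc, hqq2, one_mul]
  have haddLeft0 : Equiv.addLeft (0 : ZMod (2 * (q - 1))) = 1 := by
    refine Equiv.ext fun x => ?_
    show (0 : ZMod (2 * (q - 1))) + x = x
    rw [zero_add]
  -- the permutation representation detecting the order of T
  obtain ⟨χ, hχT⟩ : ∃ χ : PresentedGroup (stmt2Rels p q) →* Equiv.Perm (ZMod (2 * (q - 1))),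
      χ T = Equiv.addLeft 1 := by
    have hrel : ∀ r ∈ stmt2Rels p q,
        (FreeGroup.lift ![Equiv.addLeft cc, μ, Equiv.addLeft 1]) r = 1 := by
      intro r hr
      simp only [stmt2Rels, Set.mem_insert_iff, Set.mem_singleton_iff] at hr
      rcases hr with rfl | rfl | rfl | rfl | rfl | rfl | rfl <;>
        simp only [map_mul, map_pow, map_inv, FreeGroup.lift_apply_of, Matrix.cons_val_zero,
          Matrix.cons_val_one, Matrix.head_cons, Matrix.cons_val_two, Matrix.tail_cons]
      · rw [addLeft_npow, two_nsmul, hcc2, haddLeft0]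
      · rw [mul_inv_eq_one, mul_inv_eq_iff_eq_mul]
        refine Equiv.ext fun x => ?_
        simp only [Equiv.Perm.mul_apply]
        show cc + ((q : ℕ) : ZMod (2 * (q - 1))) * x
            = ((q : ℕ) : ZMod (2 * (q - 1))) * (cc + x)
        rw [mul_add, hqcc]
      · rw [mul_inv_eq_one, mul_inv_eq_iff_eq_mul]
        refine Equiv.ext fun x => ?_
        simp only [Equiv.Perm.mul_apply]
        show cc + (1 + x) = 1 + (cc + x)
        ring
      · rw [hpk, pow_mul, hμ2, one_pow]
      · rw [addLeft_npow, nsmul_eq_mul, mul_one, hcast, haddLeft0]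
      · rw [mul_inv_eq_one, addLeft_npow, nsmul_eq_mul, mul_one]
      · rw [mul_inv_eq_one]
        refine Equiv.ext fun x => ?_
        simp only [Equiv.Perm.mul_apply]
        show ((q : ℕ) : ZMod (2 * (q - 1))) * (1 + x)
            = 1 + ((q : ℕ) : ZMod (2 * (q - 1))) * (cc + x)
        rw [mul_add, mul_add, hqcc, mul_one, hqq]
        ring
    exact ⟨PresentedGroup.toGroup hrel, by rw [hTdef, PresentedGroup.toGroup.of]; rfl⟩
  -- N is normal
  have hSE_N : S * E ∈ N := mul_mem haN hEN
  have auxT : ∀ h ∈ N, T * h * T⁻¹ ∈ N := by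
    intro h hh
    rw [hN] at hh
    induction hh using Subgroup.closure_induction with
    | mem x hx =>
      rcases hx with rfl | rfl
      · rw [hconj]; exact hSE_N
      · have h2 : T * T ^ 2 * T⁻¹ = T ^ 2 := by group
        rw [h2]; exact hbN
    | one => simpa using one_mem N
    | mul x y hx hy ihx ihy =>
      have h2 : T * (x * y) * T⁻¹ = (T * x * T⁻¹) * (T * y * T⁻¹) := by group
      rw [h2]; exact mul_mem ihx ihy
    | inv x hx ih =>
      have h2 : T * x⁻¹ * T⁻¹ = (T * x * T⁻¹)⁻¹ := by group
      rw [h2]; exact inv_mem ih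
  have auxTinv : ∀ h ∈ N, T⁻¹ * h * T ∈ N := by
    intro h hh
    rw [hN] at hh
    induction hh using Subgroup.closure_induction with
    | mem x hx =>
      rcases hx with rfl | rfl
      · rw [hconj']; exact hSE_N
      · have h2 : T⁻¹ * T ^ 2 * T = T ^ 2 := by group
        rw [h2]; exact hbN
    | one => simpa using one_mem N
    | mul x y hx hy ihx ihy =>
      have h2 : T⁻¹ * (x * y) * T = (T⁻¹ * x * T) * (T⁻¹ * y * T) := by group
      rw [h2]; exact mul_mem ihx ihy
    | inv x hx ih =>
      have h2 : T⁻¹ * x⁻¹ * T = (T⁻¹ * x * T)⁻¹ := by group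
      rw [h2]; exact inv_mem ih
  have hnorm : N.Normal := by
    rw [← Subgroup.normalizer_eq_top_iff, eq_top_iff, ← PresentedGroup.closure_range_of
      (rels := stmt2Rels p q)]
    refine (Subgroup.closure_le _).mpr ?_
    rintro _ ⟨i, rfl⟩
    fin_cases i
    · exact Subgroup.le_normalizer (hEdef ▸ hEN)
    · exact Subgroup.le_normalizer (hSdef ▸ haN)
    · refine Subgroup.mem_normalizer_iff.mpr fun h => ⟨fun hh => auxT h hh, fun h2 => ?_⟩
      have h3 := auxTinv (T * h * T⁻¹) h2
      have h4 : T⁻¹ * (T * h * T⁻¹) * T = h := by group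
      rwa [h4] at h3
  haveI := hnorm
  -- N is the kernel of Φ
  have hNker : N ≤ Φ.ker := by
    rw [hN]
    refine (Subgroup.closure_le _).mpr ?_
    rintro x (rfl | rfl)
    · exact MonoidHom.mem_ker.mpr hΦS
    · refine MonoidHom.mem_ker.mpr ?_
      rw [map_pow, hΦT]
      decide
  have hπ1 : ∀ x ∈ N, (QuotientGroup.mk' N) x = 1 := fun x hx =>
    (QuotientGroup.eq_one_iff x).mpr hx
  have hzpow : ∀ g, (QuotientGroup.mk' N) g ∈ Subgroup.zpowers ((QuotientGroup.mk' N) T) := by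
    have htop : (Subgroup.zpowers ((QuotientGroup.mk' N) T)).comap (QuotientGroup.mk' N) = ⊤ := by
      rw [eq_top_iff, ← PresentedGroup.closure_range_of (rels := stmt2Rels p q)]
      refine (Subgroup.closure_le _).mpr ?_
      rintro _ ⟨i, rfl⟩
      fin_cases i
      · exact Subgroup.mem_comap.mpr (Subgroup.mem_zpowers_iff.mpr
          ⟨0, by rw [zpow_zero]; exact (hπ1 _ hEN).symm⟩)
      · exact Subgroup.mem_comap.mpr (Subgroup.mem_zpowers_iff.mpr
          ⟨0, by rw [zpow_zero]; exact (hπ1 _ haN).symm⟩)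
      · exact Subgroup.mem_comap.mpr (Subgroup.mem_zpowers_iff.mpr ⟨1, by rw [zpow_one]; rfl⟩)
    intro g
    have hg : g ∈ (Subgroup.zpowers ((QuotientGroup.mk' N) T)).comap (QuotientGroup.mk' N) :=
      htop ▸ Subgroup.mem_top g
    exact Subgroup.mem_comap.mp hg
  have hc2 : ((QuotientGroup.mk' N) T) ^ (2 : ℤ) = 1 := by
    rw [zpow_two, ← pow_two, ← map_pow]
    exact hπ1 _ hbN
  have hΦT1 : Φ T ≠ 1 := by rw [hΦT]; decide
  have hker_le : Φ.ker ≤ N := by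
    intro g hg
    have hg1 : Φ g = 1 := MonoidHom.mem_ker.mp hg
    obtain ⟨j, hj⟩ := Subgroup.mem_zpowers_iff.mp (hzpow g)
    rcases Int.even_or_odd j with ⟨r, hr⟩ | ⟨r, hr⟩
    · have h1 : (QuotientGroup.mk' N) g = 1 := by
        rw [← hj, hr, show r + r = 2 * r by ring, zpow_mul, hc2, one_zpow]
      exact (QuotientGroup.eq_one_iff g).mp h1
    · exfalso
      have h1 : (QuotientGroup.mk' N) g = (QuotientGroup.mk' N) T := by
        rw [← hj, hr, zpow_add, zpow_mul, hc2, one_zpow, one_mul, zpow_one]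
      have h2 : (QuotientGroup.mk' N) (T⁻¹ * g) = 1 := by
        rw [map_mul, map_inv, h1, inv_mul_cancel]
      have h3 : T⁻¹ * g ∈ N := (QuotientGroup.eq_one_iff _).mp h2
      have h4 : Φ (T⁻¹ * g) = 1 := MonoidHom.mem_ker.mp (hNker h3)
      rw [map_mul, map_inv, hg1, mul_one, inv_eq_one] at h4
      exact hΦT1 h4
  have hNeq : N = Φ.ker := le_antisymm hNker hker_le
  -- the index
  have hindex : N.index = 2 := by
    rw [hNeq, Subgroup.index_ker]
    have hrange : Φ.range = ⊤ := by
      rw [eq_top_iff]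
      intro x _
      have hx : ∀ y : Multiplicative (ZMod 2), y = 1 ∨ y = Multiplicative.ofAdd 1 := by decide
      rcases hx x with rfl | rfl
      · exact one_mem _
      · exact ⟨T, hΦT⟩
    rw [hrange, Subgroup.card_top, Nat.card_eq_fintype_card, Fintype.card_multiplicative,
      ZMod.card]
  -- the two cyclic homomorphisms into the presented group
  obtain ⟨fa, hfa⟩ := powHom_exists S (p - 1) hSp
  obtain ⟨fb, hfb⟩ := powHom_exists (T ^ 2) (q - 1) hbq
  have hfa' : ∀ u : Multiplicative (ZMod (p - 1)),
      fa u = S ^ (Multiplicative.toAdd u).val := by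
    intro u
    have h2 := hfa (Multiplicative.toAdd u).val
    rwa [ZMod.natCast_rightInverse (Multiplicative.toAdd u), ofAdd_toAdd] at h2
  have hfb' : ∀ u : Multiplicative (ZMod (q - 1)),
      fb u = (T ^ 2) ^ (Multiplicative.toAdd u).val := by
    intro u
    have h2 := hfb (Multiplicative.toAdd u).val
    rwa [ZMod.natCast_rightInverse (Multiplicative.toAdd u), ofAdd_toAdd] at h2
  have hcomm : ∀ u v, Commute (fa u) (fb v) := by
    intro u v
    rw [hfa', hfb']
    have hC : Commute S (T ^ 2) := hab
    exact hC.pow_pow _ _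
  set ψ : Multiplicative (ZMod (p - 1) × ZMod (q - 1)) →* PresentedGroup (stmt2Rels p q) :=
    (MonoidHom.noncommCoprod fa fb hcomm).comp multProdEquiv.toMonoidHom with hψdef
  have hψ : ∀ x, ψ x = S ^ ((Multiplicative.toAdd x).1).val *
      (T ^ 2) ^ ((Multiplicative.toAdd x).2).val := by
    intro x
    show fa (Multiplicative.ofAdd (Multiplicative.toAdd x).1) *
      fb (Multiplicative.ofAdd (Multiplicative.toAdd x).2) = _
    rw [hfa', hfb']
    rfl
  -- injectivity of ψ
  have hinj : Function.Injective ψ := by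
    refine (injective_iff_map_eq_one ψ).mpr fun x hx => ?_
    rw [hψ x] at hx
    have hm : (Multiplicative.toAdd x).1 = 0 := by
      have h1 := congrArg θ hx
      rw [map_mul, map_pow, map_pow, map_pow, hθS, hθT, one_pow, one_pow, mul_one, θ.map_one,
        ← ofAdd_nsmul, nsmul_eq_mul, mul_one] at h1
      have h2 : ((((Multiplicative.toAdd x).1).val : ℕ) : ZMod (p - 1)) = 0 := h1
      rwa [ZMod.natCast_rightInverse _] at h2
    rw [hm, ZMod.val_zero, pow_zero, one_mul] at hx
    have hn : (Multiplicative.toAdd x).2 = 0 := by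
      have h1 := congrArg χ hx
      rw [map_pow, map_pow, hχT, χ.map_one, ← pow_mul, addLeft_npow] at h1
      have h2 := congrArg (fun e : Equiv.Perm (ZMod (2 * (q - 1))) => e 0) h1
      have h4 : ((2 * ((Multiplicative.toAdd x).2).val) • (1 : ZMod (2 * (q - 1)))) + 0 = 0 := h2
      rw [add_zero, nsmul_eq_mul, mul_one] at h4
      obtain ⟨t, ht⟩ := (ZMod.natCast_eq_zero_iff _ _).mp h4
      have ht' : ((Multiplicative.toAdd x).2).val = (q - 1) * t := by
        rw [mul_assoc] at ht
        exact Nat.eq_of_mul_eq_mul_left (by norm_num) ht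
      have hval0 : ((Multiplicative.toAdd x).2).val = 0 :=
        Nat.eq_zero_of_dvd_of_lt ⟨t, ht'⟩ (ZMod.val_lt _)
      have h5 : ((((Multiplicative.toAdd x).2).val : ℕ) : ZMod (q - 1))
          = (Multiplicative.toAdd x).2 := ZMod.natCast_rightInverse _
      rw [← h5, hval0, Nat.cast_zero]
    have h0 : Multiplicative.toAdd x = 0 := Prod.ext hm hn
    exact Multiplicative.toAdd.injective (by rw [h0]; rfl)
  -- range of ψ is N
  have hrange : ψ.range = N := by
    refine le_antisymm ?_ ?_
    · rintro y ⟨x, rfl⟩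
      rw [hψ x]
      exact mul_mem (pow_mem haN _) (pow_mem hbN _)
    · rw [hN]
      refine (Subgroup.closure_le _).mpr ?_
      rintro x (rfl | rfl)
      · refine ⟨Multiplicative.ofAdd (((1 : ℕ) : ZMod (p - 1)), 0), ?_⟩
        rw [hψ]
        show S ^ (((1 : ℕ) : ZMod (p - 1))).val * (T ^ 2) ^ (0 : ZMod (q - 1)).val = S
        rw [ZMod.val_cast_of_lt (by omega), ZMod.val_zero, pow_zero, mul_one, pow_one]
      · refine ⟨Multiplicative.ofAdd (0, ((1 : ℕ) : ZMod (q - 1))), ?_⟩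
        rw [hψ]
        show S ^ (0 : ZMod (p - 1)).val * (T ^ 2) ^ (((1 : ℕ) : ZMod (q - 1))).val = T ^ 2
        rw [ZMod.val_cast_of_lt (by omega), ZMod.val_zero, pow_zero, one_mul, pow_one]
  -- assemble the isomorphism
  have iso : N ≃* Multiplicative (ZMod (p - 1) × ZMod (q - 1)) :=
    ((MonoidHom.ofInjective hinj).trans (MulEquiv.subgroupCongr hrange)).symm
  refine ⟨?_, hindex, ⟨iso⟩⟩
  intro x y
  apply iso.injective
  rw [map_mul, map_mul, mul_comm]
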